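/- Let t ≥ 1 and k ≥ t+2 be integers. There exists n_0 = n_0(k,t) such that for every n ≥ n_0 and every t-element set X ⊆ [n], the complete sunflower S_X = {A ∈ binom([n],k) : X ⊆ A} satisfies |I(S_X)| < |I(A_t)|, where A_t = {A ∈ binom([n],k) : |A ∩ {1,…,t+2}| ≥ t+1}. -/

import Mathlib

open Finset

/-- The collection of distinct intersections `{F ∩ G : F, G ∈ 𝓕, F ≠ G}`. -/
def interFam (F : Finset (Finset ℕ)) : Finset (Finset ℕ) :=
  ((F ×ˢ F).filter fun p => p.1 ≠ p.2).image fun p => p.1 ∩ p.2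

/-- A family is `t`-intersecting if any two members meet in at least `t` elements. -/
def tIntersecting (t : ℕ) (F : Finset (Finset ℕ)) : Prop :=
  ∀ A ∈ F, ∀ B ∈ F, t ≤ (A ∩ B).card

/-- The family `𝓐_t = {A ∈ [n]^(k) : |A ∩ {1,…,t+2}| ≥ t+1}`. -/
def At (n k t : ℕ) : Finset (Finset ℕ) :=
  ((Finset.Icc 1 n).powersetCard k).filter fun A => t + 1 ≤ (A ∩ Finset.Icc 1 (t + 2)).card

/-- A `t`-intersecting family `F ⊆ [n]^(k)` is saturated if no `k`-set outside `F`
can be added keeping the `t`-intersecting property. -/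
def saturated (n k t : ℕ) (F : Finset (Finset ℕ)) : Prop :=
  ∀ G ∈ (Finset.Icc 1 n).powersetCard k, G ∉ F → ¬ tIntersecting t (insert G F)

/-- The family of `t`-transversals `T(F)`. -/
def transv (n k t : ℕ) (F : Finset (Finset ℕ)) : Finset (Finset ℕ) :=
  (Finset.Icc 1 n).powerset.filter fun T => T.card ≤ k ∧ ∀ A ∈ F, t ≤ (T ∩ A).card

/-- The minimal members (under inclusion) of a family. -/
def minFam (S : Finset (Finset ℕ)) : Finset (Finset ℕ) :=
  S.filter fun B => ∀ B' ∈ S, B' ⊆ B → B' = B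

lemma mem_interFam {F : Finset (Finset ℕ)} {Z : Finset ℕ} :
    Z ∈ interFam F ↔ ∃ a, a ∈ F ∧ ∃ b, b ∈ F ∧ a ≠ b ∧ a ∩ b = Z := by
  simp only [interFam, mem_image, mem_filter, mem_product, Prod.exists]
  constructor
  · rintro ⟨a, b, ⟨⟨ha, hb⟩, hne⟩, h⟩; exact ⟨a, ha, b, hb, hne, h⟩
  · rintro ⟨a, ha, b, hb, hne, h⟩; exact ⟨a, b, ⟨⟨ha, hb⟩, hne⟩, h⟩

lemma mem_At_iff {n k t : ℕ} {S : Finset ℕ} :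
    S ∈ At n k t ↔ S ⊆ Icc 1 n ∧ S.card = k ∧ t + 1 ≤ (S ∩ Icc 1 (t + 2)).card := by
  simp [At, mem_powersetCard, and_assoc]

lemma interFam_mem_of {F : Finset (Finset ℕ)} {Z D D' : Finset ℕ}
    (h1 : Z ∪ D ∈ F) (h2 : Z ∪ D' ∈ F) (hDD' : Disjoint D D') (hD : D.Nonempty)
    (hZD : Disjoint Z D) : Z ∈ interFam F := by
  rw [mem_interFam]
  refine ⟨Z ∪ D, h1, Z ∪ D', h2, ?_, ?_⟩
  · obtain ⟨a, ha⟩ := hD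
    intro h
    have haG : a ∈ Z ∪ D' := h ▸ mem_union_right _ ha
    rcases mem_union.mp haG with h' | h'
    · exact (disjoint_right.mp hZD ha) h'
    · exact (disjoint_left.mp hDD' ha) h'
  · rw [← union_inter_distrib_left, disjoint_iff_inter_eq_empty.mp hDD', union_empty]

lemma realize (t k n : ℕ) (hk : t + 2 ≤ k) (hn : 3*k + t + 3 ≤ n)
    (Z : Finset ℕ) (hZn : Z ⊆ Icc 1 n) (hZc : Z.card ≤ k - 1)
    (hZI : t ≤ (Z ∩ Icc 1 (t+2)).card) :
    Z ∈ interFam (At n k t) := by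
  set I := Icc 1 (t+2) with hIdef
  have hIn : I ⊆ Icc 1 n := Icc_subset_Icc le_rfl (by omega)
  have hIcard : I.card = t + 2 := by rw [hIdef, Nat.card_Icc]; omega
  set R := (Icc 1 n) \ (Z ∪ I) with hRdef
  have hRcard : 2*k + 2 ≤ R.card := by
    have h1 : (Z ∪ I).card ≤ Z.card + I.card := card_union_le _ _
    have h3 : R.card = (Icc 1 n).card - (Z ∪ I).card :=
      card_sdiff_of_subset (union_subset hZn hIn)
    have h4 : (Icc 1 n).card = n := by rw [Nat.card_Icc]; omega
    omega
  have hRZ : Disjoint R Z := sdiff_disjoint.mono_right subset_union_left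
  have hRI : Disjoint R I := sdiff_disjoint.mono_right subset_union_right
  have hRn : R ⊆ Icc 1 n := sdiff_subset
  by_cases hcase : t + 1 ≤ (Z ∩ I).card
  · -- Z already meets I in ≥ t+1 points
    obtain ⟨A', hA'R, hA'card⟩ :=
      exists_subset_card_eq (show k - Z.card ≤ R.card by omega)
    have hRA : k - Z.card ≤ (R \ A').card := by
      have := card_sdiff_of_subset hA'R; omega
    obtain ⟨B', hB'R, hB'card⟩ := exists_subset_card_eq hRA
    have hB'R' : B' ⊆ R := hB'R.trans sdiff_subset
    have hZA : Disjoint Z A' := (hRZ.mono_left hA'R).symm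
    have hZB : Disjoint Z B' := (hRZ.mono_left hB'R').symm
    have hAB : Disjoint A' B' := (sdiff_disjoint.mono_left hB'R).symm
    have hmem : ∀ D, D ⊆ R → Disjoint Z D → D.card = k - Z.card → Z ∪ D ∈ At n k t := by
      intro D hDR hZD hDc
      rw [mem_At_iff]
      refine ⟨union_subset hZn (hDR.trans hRn), ?_, ?_⟩
      · rw [card_union_of_disjoint hZD]; omega
      · exact hcase.trans (card_le_card (inter_subset_inter subset_union_left le_rfl))
    refine interFam_mem_of (hmem A' hA'R hZA hA'card) (hmem B' hB'R' hZB hB'card) hAB ?_ hZA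
    rw [← card_pos, hA'card]; omega
  · -- |Z ∩ I| = t exactly
    have hIZ : (I \ Z).card = 2 := by
      have h := card_sdiff_add_card_inter I Z
      rw [inter_comm] at h
      omega
    obtain ⟨a, b, hab, hIZ2⟩ := card_eq_two.mp hIZ
    have haIZ : a ∈ I \ Z := by rw [hIZ2]; simp
    have hbIZ : b ∈ I \ Z := by rw [hIZ2]; simp
    obtain ⟨haI, haZ⟩ := mem_sdiff.mp haIZ
    obtain ⟨hbI, hbZ⟩ := mem_sdiff.mp hbIZ
    obtain ⟨A', hA'R, hA'card⟩ :=
      exists_subset_card_eq (show k - Z.card - 1 ≤ R.card by omega)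
    have hRA : k - Z.card - 1 ≤ (R \ A').card := by
      have := card_sdiff_of_subset hA'R; omega
    obtain ⟨B', hB'R, hB'card⟩ := exists_subset_card_eq hRA
    have hB'R' : B' ⊆ R := hB'R.trans sdiff_subset
    have hAB' : Disjoint A' B' := (sdiff_disjoint.mono_left hB'R).symm
    have hmem : ∀ x D, x ∈ I → x ∉ Z → D ⊆ R → D.card = k - Z.card - 1 →
        Z ∪ insert x D ∈ At n k t := by
      intro x D hxI hxZ hDR hDc
      have hxD : x ∉ D := fun h => (disjoint_left.mp hRI (hDR h)) hxI
      have hZD : Disjoint Z D := (hRZ.mono_left hDR).symm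
      have hZxD : Disjoint Z (insert x D) := by
        rw [disjoint_insert_right]; exact ⟨hxZ, hZD⟩
      rw [mem_At_iff]
      refine ⟨union_subset hZn (insert_subset (hIn hxI) (hDR.trans hRn)), ?_, ?_⟩
      · rw [card_union_of_disjoint hZxD, card_insert_of_notMem hxD]; omega
      · show t + 1 ≤ ((Z ∪ insert x D) ∩ I).card
        have hsub : insert x (Z ∩ I) ⊆ (Z ∪ insert x D) ∩ I := by
          apply insert_subset
          · exact mem_inter.mpr ⟨mem_union_right _ (mem_insert_self _ _), hxI⟩
          · exact inter_subset_inter subset_union_left le_rfl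
        have : (insert x (Z ∩ I)).card = (Z ∩ I).card + 1 :=
          card_insert_of_notMem (fun h => hxZ (mem_inter.mp h).1)
        have h2 := card_le_card hsub
        omega
    have hdisj : Disjoint (insert a A') (insert b B') := by
      rw [disjoint_insert_left, disjoint_insert_right]
      refine ⟨?_, fun h => (disjoint_left.mp hRI (hA'R h)) hbI, hAB'⟩
      simp only [mem_insert, not_or]
      exact ⟨hab, fun h => (disjoint_left.mp hRI (hB'R' h)) haI⟩
    have hZaA : Disjoint Z (insert a A') := by
      rw [disjoint_insert_right]
      exact ⟨haZ, (hRZ.mono_left hA'R).symm⟩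
    exact interFam_mem_of (hmem a A' haI haZ hA'R hA'card)
      (hmem b B' hbI hbZ hB'R' hB'card) hdisj (insert_nonempty _ _) hZaA

lemma count_pow (A : Finset ℕ) (m : ℕ) :
    (A.powerset.filter fun V => V.card ≤ m).card = ∑ i ∈ range (m+1), A.card.choose i := by
  have h : A.powerset.filter (fun V => V.card ≤ m)
      = (range (m+1)).biUnion (fun i => A.powersetCard i) := by
    ext V
    simp only [mem_filter, mem_powerset, mem_biUnion, mem_range, mem_powersetCard,
      Nat.lt_succ_iff]
    constructor
    · rintro ⟨h1, h2⟩; exact ⟨V.card, h2, h1, rfl⟩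
    · rintro ⟨i, hi, h1, rfl⟩; exact ⟨h1, hi⟩
  rw [h, card_biUnion]
  · exact Finset.sum_congr rfl fun i _ => Finset.card_powersetCard i A
  · intro x _ y _ hxy
    simp only [Function.onFun]; rw [Finset.disjoint_left]
    intro V hV hV'
    rw [mem_powersetCard] at hV hV'
    exact hxy (hV.2 ▸ hV'.2 ▸ rfl)

lemma upper (t k n : ℕ) (X : Finset ℕ) (hX : X ⊆ Icc 1 n) (hXc : X.card = t) :
    (interFam (((Icc 1 n).powersetCard k).filter (fun A => X ⊆ A))).card
      ≤ ((Icc 1 n \ X).powerset.filter fun V => V.card ≤ k - 1 - t).card := by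
  have key : ∀ W ∈ interFam (((Icc 1 n).powersetCard k).filter (fun A => X ⊆ A)),
      X ⊆ W ∧ W ⊆ Icc 1 n ∧ W.card < k := by
    intro W hW
    rw [mem_interFam] at hW
    obtain ⟨F, hF, G, hG, hne, rfl⟩ := hW
    rw [mem_filter, mem_powersetCard] at hF hG
    refine ⟨subset_inter hF.2 hG.2, inter_subset_left.trans hF.1.1, ?_⟩
    by_contra hlt
    push_neg at hlt
    have h1 : F ∩ G = F := eq_of_subset_of_card_le inter_subset_left (by rw [hF.1.2]; exact hlt)
    have h2 : F ∩ G = G := eq_of_subset_of_card_le inter_subset_right (by rw [hG.1.2]; exact hlt)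
    exact hne (h1.symm.trans h2)
  apply card_le_card_of_injOn (fun W => W \ X)
  · intro W hW
    obtain ⟨h1, h2, h3⟩ := key W hW
    simp only [mem_coe, mem_filter, mem_powerset]
    constructor
    · exact sdiff_subset_sdiff h2 Subset.rfl
    · rw [card_sdiff_of_subset h1, hXc]; omega
  · intro W1 h1 W2 h2 h
    have k1 := (key W1 h1).1
    have k2 := (key W2 h2).1
    rw [← sdiff_union_of_subset k1, ← sdiff_union_of_subset k2]
    exact congrArg (· ∪ X) h

lemma Pcard (t k n : ℕ) (hk : t + 2 ≤ k) (htn : t ≤ n) :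
    (((Icc 1 n).powerset).filter fun Z => Icc 1 t ⊆ Z ∧ Z.card ≤ k - 1).card
      = ((Icc 1 n \ Icc 1 t).powerset.filter fun V => V.card ≤ k - 1 - t).card := by
  have hTc : (Icc 1 t).card = t := by rw [Nat.card_Icc]; omega
  have hTn : Icc 1 t ⊆ Icc 1 n := Icc_subset_Icc le_rfl htn
  apply card_bij' (fun Z _ => Z \ Icc 1 t) (fun V _ => V ∪ Icc 1 t)
  · intro Z hZ
    rw [mem_filter, mem_powerset] at hZ ⊢
    obtain ⟨hZn, hTZ, hZc⟩ := hZ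
    refine ⟨sdiff_subset_sdiff hZn Subset.rfl, ?_⟩
    rw [card_sdiff_of_subset hTZ, hTc]; omega
  · intro V hV
    rw [mem_filter, mem_powerset] at hV ⊢
    obtain ⟨hVn, hVc⟩ := hV
    refine ⟨union_subset (hVn.trans sdiff_subset) hTn, subset_union_right, ?_⟩
    have := card_union_le V (Icc 1 t)
    omega
  · intro Z hZ
    rw [mem_filter] at hZ
    exact sdiff_union_of_subset hZ.2.1
  · intro V hV
    rw [mem_filter, mem_powerset] at hV
    have hdisj : Disjoint V (Icc 1 t) := sdiff_disjoint.mono_left hV.1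
    rw [union_sdiff_right, sdiff_eq_self_of_disjoint hdisj]

theorem stmt12 (t k : ℕ) (ht : 1 ≤ t) (hk : t + 2 ≤ k) :
    ∃ n₀ : ℕ, ∀ n : ℕ, n₀ ≤ n →
      ∀ X : Finset ℕ, X ⊆ Finset.Icc 1 n → X.card = t →
        (interFam (((Finset.Icc 1 n).powersetCard k).filter (fun A => X ⊆ A))).card
          < (interFam (At n k t)).card := by
  refine ⟨3*k + t + 3, fun n hn X hX hXc => ?_⟩
  have hcardIcc : (Icc 1 n).card = n := by rw [Nat.card_Icc]; omega
  have hXn : (Icc 1 n \ X).card = n - t := by rw [card_sdiff_of_subset hX, hcardIcc, hXc]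
  have hTn : (Icc 1 n \ Icc 1 t).card = n - t := by
    rw [card_sdiff_of_subset (Icc_subset_Icc le_rfl (by omega)), hcardIcc, Nat.card_Icc]; omega
  have h1 := upper t k n X hX hXc
  rw [count_pow, hXn] at h1
  set P := ((Icc 1 n).powerset).filter fun Z => Icc 1 t ⊆ Z ∧ Z.card ≤ k - 1 with hPdef
  have hP : P.card = ∑ i ∈ range (k-1-t+1), (n-t).choose i := by
    rw [hPdef, Pcard t k n hk (by omega), count_pow, hTn]
  have hsubset : insert (Icc 2 (t+1)) P ⊆ interFam (At n k t) := by
    intro Z hZ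
    rcases mem_insert.mp hZ with h | h
    · subst h
      apply realize t k n hk hn
      · exact Icc_subset_Icc (by omega) (by omega)
      · rw [Nat.card_Icc]; omega
      · have : Icc 2 (t+1) ∩ Icc 1 (t+2) = Icc 2 (t+1) :=
          inter_eq_left.mpr (Icc_subset_Icc (by omega) (by omega))
        rw [this, Nat.card_Icc]; omega
    · rw [hPdef, mem_filter, mem_powerset] at h
      obtain ⟨hZn, hTZ, hZc⟩ := h
      apply realize t k n hk hn Z hZn hZc
      have hsub : Icc 1 t ⊆ Z ∩ Icc 1 (t+2) :=
        subset_inter hTZ (Icc_subset_Icc le_rfl (by omega))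
      have := card_le_card hsub
      rw [Nat.card_Icc] at this
      omega
  have hZ0P : Icc 2 (t+1) ∉ P := by
    intro h
    rw [hPdef, mem_filter] at h
    have h1t : (1 : ℕ) ∈ Icc 1 t := by rw [mem_Icc]; omega
    have := h.2.1 h1t
    rw [mem_Icc] at this
    omega
  have h2 : P.card + 1 ≤ (interFam (At n k t)).card := by
    rw [← card_insert_of_notMem hZ0P]
    exact card_le_card hsubset
  omega
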